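/- Let U ⊆ ℝ \ {0} be open and let f : ℝ → ℝ be C⁵ on U. Define (L₁ f)(x) = f''(x) − (2/x)·f'(x) and (M₁ f)(x) = f'''(x) − (3/x)·f''(x) + (3/x²)·f'(x). Then L₁(M₁ f)(x) = M₁(L₁ f)(x) for every x ∈ U, i.e. the second-order operator L₁ and the third-order operator M₁ commute. -/

import Mathlib

/-- The gauge-transformed Calogero–Moser operator `L₁ = d²/dx² − (2/x)·d/dx`. -/
noncomputable def L1 (f : ℝ → ℝ) : ℝ → ℝ :=
  fun x => deriv (deriv f) x - 2 / x * deriv f x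

/-- The third-order operator `M₁ = d³/dx³ − (3/x)·d²/dx² + (3/x²)·d/dx`. -/
noncomputable def M1 (f : ℝ → ℝ) : ℝ → ℝ :=
  fun x => deriv (deriv (deriv f)) x - 3 / x * deriv (deriv f) x
    + 3 / x ^ 2 * deriv f x

/-- Derivative of a combination `p + a/z·q + b/z²·r + c/z³·s` at a point `y ≠ 0`. -/
lemma aux_hasDerivAt (a b c : ℝ) {p q r s : ℝ → ℝ} {p' q' r' s' : ℝ} {y : ℝ} (hy : y ≠ 0)
    (hp : HasDerivAt p p' y) (hq : HasDerivAt q q' y) (hr : HasDerivAt r r' y)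
    (hs : HasDerivAt s s' y) :
    HasDerivAt (fun z => p z + a / z * q z + b / z ^ 2 * r z + c / z ^ 3 * s z)
      (p' + (a / y * q' - a / y ^ 2 * q y) + (b / y ^ 2 * r' - 2 * b / y ^ 3 * r y)
        + (c / y ^ 3 * s' - 3 * c / y ^ 4 * s y)) y := by
  have ha : HasDerivAt (fun z : ℝ => a / z) (-a / y ^ 2) y := by
    have := (hasDerivAt_inv hy).const_mul a
    simpa [div_eq_mul_inv, neg_div] using this
  have hb : HasDerivAt (fun z : ℝ => b / z ^ 2) (-2 * b / y ^ 3) y := by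
    have h2 := ((hasDerivAt_pow 2 y).inv (pow_ne_zero 2 hy)).const_mul b
    convert h2 using 1
    · rfl
    · rfl
    · rfl
    push_cast
    field_simp
  have hc : HasDerivAt (fun z : ℝ => c / z ^ 3) (-3 * c / y ^ 4) y := by
    have h3 := ((hasDerivAt_pow 3 y).inv (pow_ne_zero 3 hy)).const_mul c
    convert h3 using 1
    · rfl
    · rfl
    · rfl
    push_cast
    field_simp
  have H := ((hp.add (ha.mul hq)).add (hb.mul hr)).add (hc.mul hs)
  convert H using 1
  · rfl
  · rfl
  · rfl
  ring

set_option maxHeartbeats 1600000 in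
/-- The operators `L₁` and `M₁` commute: for `f` of class `C⁵` on an open set
`U ⊆ ℝ \ {0}`, `L₁(M₁ f) = M₁(L₁ f)` on `U`. -/
theorem L1_M1_commute (U : Set ℝ) (hU : IsOpen U) (hU0 : ∀ x ∈ U, x ≠ 0)
    (f : ℝ → ℝ) (hf : ContDiffOn ℝ 5 f U) :
    ∀ x ∈ U, L1 (M1 f) x = M1 (L1 f) x := by
  have c1 : ContDiffOn ℝ 4 (deriv f) U := hf.deriv_of_isOpen hU (by norm_num)
  have c2 : ContDiffOn ℝ 3 (deriv (deriv f)) U := c1.deriv_of_isOpen hU (by norm_num)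
  have c3 : ContDiffOn ℝ 2 (deriv (deriv (deriv f))) U := c2.deriv_of_isOpen hU (by norm_num)
  have c4 : ContDiffOn ℝ 1 (deriv (deriv (deriv (deriv f)))) U :=
    c3.deriv_of_isOpen hU (by norm_num)
  have H0 : ∀ y ∈ U, HasDerivAt f (deriv f y) y := fun y hy =>
    ((hf.differentiableOn (by norm_num)).differentiableAt (hU.mem_nhds hy)).hasDerivAt
  have H1 : ∀ y ∈ U, HasDerivAt (deriv f) (deriv (deriv f) y) y := fun y hy =>
    ((c1.differentiableOn (by norm_num)).differentiableAt (hU.mem_nhds hy)).hasDerivAt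
  have H2 : ∀ y ∈ U, HasDerivAt (deriv (deriv f)) (deriv (deriv (deriv f)) y) y := fun y hy =>
    ((c2.differentiableOn (by norm_num)).differentiableAt (hU.mem_nhds hy)).hasDerivAt
  have H3 : ∀ y ∈ U, HasDerivAt (deriv (deriv (deriv f)))
      (deriv (deriv (deriv (deriv f))) y) y := fun y hy =>
    ((c3.differentiableOn (by norm_num)).differentiableAt (hU.mem_nhds hy)).hasDerivAt
  have H4 : ∀ y ∈ U, HasDerivAt (deriv (deriv (deriv (deriv f))))
      (deriv (deriv (deriv (deriv (deriv f)))) y) y := fun y hy =>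
    ((c4.differentiableOn (by norm_num)).differentiableAt (hU.mem_nhds hy)).hasDerivAt
  -- first derivative of M1 f on U
  have hMeq : M1 f = fun z => deriv (deriv (deriv f)) z + (-3) / z * deriv (deriv f) z
      + 3 / z ^ 2 * deriv f z + 0 / z ^ 3 * f z := by
    funext z; simp only [M1]; ring
  have hA : Set.EqOn (deriv (M1 f))
      (fun y => deriv (deriv (deriv (deriv f))) y + (-3) / y * deriv (deriv (deriv f)) y
        + 6 / y ^ 2 * deriv (deriv f) y + (-6) / y ^ 3 * deriv f y) U := by
    intro y hy
    rw [hMeq, (aux_hasDerivAt (-3) 3 0 (hU0 y hy) (H3 y hy) (H2 y hy) (H1 y hy)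
      (H0 y hy)).deriv]
    have hy0 := hU0 y hy
    field_simp
    ring
  -- first derivative of L1 f on U
  have hLeq : L1 f = fun z => deriv (deriv f) z + (-2) / z * deriv f z
      + 0 / z ^ 2 * f z + 0 / z ^ 3 * f z := by
    funext z; simp only [L1]; ring
  have hB : Set.EqOn (deriv (L1 f))
      (fun y => deriv (deriv (deriv f)) y + (-2) / y * deriv (deriv f) y
        + 2 / y ^ 2 * deriv f y + 0 / y ^ 3 * f y) U := by
    intro y hy
    rw [hLeq, (aux_hasDerivAt (-2) 0 0 (hU0 y hy) (H2 y hy) (H1 y hy) (H0 y hy)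
      (H0 y hy)).deriv]
    have hy0 := hU0 y hy
    field_simp
    ring
  -- second derivative of L1 f on U
  have hB2 : Set.EqOn (deriv (deriv (L1 f)))
      (fun y => deriv (deriv (deriv (deriv f))) y + (-2) / y * deriv (deriv (deriv f)) y
        + 4 / y ^ 2 * deriv (deriv f) y + (-4) / y ^ 3 * deriv f y) U := by
    intro y hy
    rw [(Filter.eventuallyEq_of_mem (hU.mem_nhds hy) hB).deriv_eq,
      (aux_hasDerivAt (-2) 2 0 (hU0 y hy) (H3 y hy) (H2 y hy) (H1 y hy) (H0 y hy)).deriv]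
    have hy0 := hU0 y hy
    field_simp
    ring
  intro x hx
  have hx0 := hU0 x hx
  -- second derivative of M1 f at x
  have e1 : deriv (deriv (M1 f)) x =
      deriv (deriv (deriv (deriv (deriv f)))) x
        + ((-3) / x * deriv (deriv (deriv (deriv f))) x
            - (-3) / x ^ 2 * deriv (deriv (deriv f)) x)
        + (6 / x ^ 2 * deriv (deriv (deriv f)) x - 2 * 6 / x ^ 3 * deriv (deriv f) x)
        + ((-6) / x ^ 3 * deriv (deriv f) x - 3 * (-6) / x ^ 4 * deriv f x) := by
    rw [(Filter.eventuallyEq_of_mem (hU.mem_nhds hx) hA).deriv_eq]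
    exact (aux_hasDerivAt (-3) 6 (-6) hx0 (H4 x hx) (H3 x hx) (H2 x hx) (H1 x hx)).deriv
  -- third derivative of L1 f at x
  have e2 : deriv (deriv (deriv (L1 f))) x =
      deriv (deriv (deriv (deriv (deriv f)))) x
        + ((-2) / x * deriv (deriv (deriv (deriv f))) x
            - (-2) / x ^ 2 * deriv (deriv (deriv f)) x)
        + (4 / x ^ 2 * deriv (deriv (deriv f)) x - 2 * 4 / x ^ 3 * deriv (deriv f) x)
        + ((-4) / x ^ 3 * deriv (deriv f) x - 3 * (-4) / x ^ 4 * deriv f x) := by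
    rw [(Filter.eventuallyEq_of_mem (hU.mem_nhds hx) hB2).deriv_eq]
    exact (aux_hasDerivAt (-2) 4 (-4) hx0 (H4 x hx) (H3 x hx) (H2 x hx) (H1 x hx)).deriv
  simp only [L1, M1]
  rw [e1, e2, hA hx, hB hx, hB2 hx]
  field_simp
  ring
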